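/- Let r ≥ 1 be an odd integer and G a graph. For any partition (A, Ā) of V(G), if G^r admits an induced matching of size w+1 between A and Ā (i.e., independent sets X ⊆ A, Y ⊆ Ā in G^r with |X| = |Y| = w+1 such that the bipartite graph of G^r between X and Y is a perfect matching), then G also admits an induced matching of size w+1 between A and Ā. -/

import Mathlib

/-- The `r`-th power of a graph `G`: two distinct vertices are adjacent iff their distance
in `G` is at most `r` (i.e. iff some walk of length at most `r` joins them). -/
def SimpleGraph.power {V : Type*} (G : SimpleGraph V) (r : ℕ) : SimpleGraph V where
  Adj u v := u ≠ v ∧ ∃ p : G.Walk u v, p.length ≤ r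
  symm := by
    constructor
    rintro u v ⟨h, p, hp⟩
    exact ⟨h.symm, p.reverse, by simpa using hp⟩
  loopless := by constructor; rintro u ⟨h, -⟩; exact h rfl

open SimpleGraph in
/-- Any walk from a vertex in `A` to a vertex outside `A` contains an edge crossing the cut. -/
lemma exists_cross_edge {V : Type*} (G : SimpleGraph V) (A : Set V) :
    ∀ {u v : V} (W : G.Walk u v), u ∈ A → v ∉ A →
    ∃ a bb : V, a ∈ A ∧ bb ∉ A ∧ G.Adj a bb ∧
      ∃ (W1 : G.Walk u a) (W2 : G.Walk bb v), W1.length + 1 + W2.length = W.length := by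
  intro u v W
  induction W with
  | nil => intro hu hv; exact absurd hu hv
  | @cons u u' v hadj q ih =>
    intro hu hv
    by_cases hu' : u' ∈ A
    · obtain ⟨a, bb, ha, hb, hab, W1, W2, hlen⟩ := ih hu' hv
      exact ⟨a, bb, ha, hb, hab, Walk.cons hadj W1, W2, by simp [Walk.length_cons]; omega⟩
    · exact ⟨u, u', hu, hu', hadj, Walk.nil, q, by simp; omega⟩

open SimpleGraph in
/-- For odd `r ≥ 1` and any partition `(A, Aᶜ)` of the vertices, if `G^r` has an induced
matching of size `w + 1` between `A` and `Aᶜ`, then so does `G`. -/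
theorem stmt_14 {V : Type*} [DecidableEq V] (G : SimpleGraph V) (r w : ℕ)
    (hodd : Odd r) (hr : 1 ≤ r) (A : Set V)
    (h : ∃ (X Y : Finset V) (f : V → V), (X : Set V) ⊆ A ∧ (Y : Set V) ⊆ Aᶜ ∧
      X.card = w + 1 ∧ Y.card = w + 1 ∧
      (∀ x ∈ X, ∀ y ∈ X, ¬ (G.power r).Adj x y) ∧
      (∀ x ∈ Y, ∀ y ∈ Y, ¬ (G.power r).Adj x y) ∧
      Set.InjOn f X ∧ Y = X.image f ∧
      (∀ x ∈ X, (G.power r).Adj x (f x)) ∧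
      (∀ x ∈ X, ∀ y ∈ Y, (G.power r).Adj x y → y = f x)) :
    ∃ (X Y : Finset V) (f : V → V), (X : Set V) ⊆ A ∧ (Y : Set V) ⊆ Aᶜ ∧
      X.card = w + 1 ∧ Y.card = w + 1 ∧
      (∀ x ∈ X, ∀ y ∈ X, ¬ G.Adj x y) ∧
      (∀ x ∈ Y, ∀ y ∈ Y, ¬ G.Adj x y) ∧
      Set.InjOn f X ∧ Y = X.image f ∧
      (∀ x ∈ X, G.Adj x (f x)) ∧
      (∀ x ∈ X, ∀ y ∈ Y, G.Adj x y → y = f x) := by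
  classical
  obtain ⟨k, hk⟩ := hodd
  obtain ⟨X, Y, f, hXA, hYA, hXc, hYc, hXind, hYind, hfInj, hYim, hAdjf, hMatch⟩ := h
  -- membership of images
  have hfY : ∀ x ∈ X, f x ∈ Y := by
    intro x hx; rw [hYim]; exact Finset.mem_image_of_mem f hx
  have hfne : ∀ x ∈ X, ∀ x' ∈ X, x ≠ x' → f x ≠ f x' := by
    intro x hx x' hx' hne hEq
    exact hne (hfInj (Finset.mem_coe.mpr hx) (Finset.mem_coe.mpr hx') hEq)
  -- no short walks between distinct matched vertices
  have hnXX : ∀ x ∈ X, ∀ x' ∈ X, x ≠ x' → ∀ (p : G.Walk x x'), r < p.length := by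
    intro x hx x' hx' hne p
    by_contra hle
    push_neg at hle
    exact hXind x hx x' hx' ⟨hne, p, hle⟩
  have hnYY : ∀ x ∈ X, ∀ x' ∈ X, x ≠ x' → ∀ (p : G.Walk (f x) (f x')), r < p.length := by
    intro x hx x' hx' hne p
    by_contra hle
    push_neg at hle
    exact hYind (f x) (hfY x hx) (f x') (hfY x' hx') ⟨hfne x hx x' hx' hne, p, hle⟩
  have hnXY : ∀ x ∈ X, ∀ x' ∈ X, x ≠ x' → ∀ (p : G.Walk x (f x')), r < p.length := by
    intro x hx x' hx' hne p
    by_contra hle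
    push_neg at hle
    have hxA : x ∈ A := hXA (Finset.mem_coe.mpr hx)
    have hfA : f x' ∈ Aᶜ := hYA (Finset.mem_coe.mpr (hfY x' hx'))
    have hneq : x ≠ f x' := by
      intro hEq; exact hfA (hEq ▸ hxA)
    have := hMatch x hx (f x') (hfY x' hx') ⟨hneq, p, hle⟩
    exact hfne x' hx' x hx hne.symm this
  -- choose crossing edges
  have hdata : ∀ x : V, ∃ a bb : V, x ∈ X → a ∈ A ∧ bb ∉ A ∧ G.Adj a bb ∧
      ∃ (W1 : G.Walk x a) (W2 : G.Walk bb (f x)), W1.length + 1 + W2.length ≤ r := by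
    intro x
    by_cases hx : x ∈ X
    · obtain ⟨hne, W, hW⟩ := hAdjf x hx
      have hxA : x ∈ A := hXA (Finset.mem_coe.mpr hx)
      have hfA : f x ∉ A := hYA (Finset.mem_coe.mpr (hfY x hx))
      obtain ⟨a, bb, ha, hb, hab, W1, W2, hlen⟩ := exists_cross_edge G A W hxA hfA
      exact ⟨a, bb, fun _ => ⟨ha, hb, hab, W1, W2, by omega⟩⟩
    · exact ⟨x, x, fun hx' => absurd hx' hx⟩
  choose a b hab using hdata
  -- the key incompatibility facts
  have key : ∀ x ∈ X, ∀ x' ∈ X, x ≠ x' →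
      (a x ≠ a x' ∧ ¬ G.Adj (a x) (a x')) ∧ (b x ≠ b x' ∧ ¬ G.Adj (b x) (b x')) ∧
      ¬ G.Adj (a x) (b x') := by
    intro x hx x' hx' hne
    obtain ⟨haA, hbA, hadj, W1, W2, hlen⟩ := hab x hx
    obtain ⟨haA', hbA', hadj', W1', W2', hlen'⟩ := hab x' hx'
    refine ⟨⟨?_, ?_⟩, ⟨?_, ?_⟩, ?_⟩
    · intro heq
      have t1 := hnXX x hx x' hx' hne (W1.append ((W1'.copy rfl heq.symm).reverse))
      have t2 := hnYY x hx x' hx' hne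
        (W2.reverse.append (Walk.cons hadj.symm ((Walk.cons hadj' W2').copy heq.symm rfl)))
      simp [Walk.length_append, Walk.length_reverse, Walk.length_copy, Walk.length_cons] at t1 t2
      omega
    · intro hA2
      have t1 := hnXX x hx x' hx' hne (W1.append (Walk.cons hA2 W1'.reverse))
      have t2 := hnYY x hx x' hx' hne
        (W2.reverse.append (Walk.cons hadj.symm (Walk.cons hA2 (Walk.cons hadj' W2'))))
      have t3 := hnXY x hx x' hx' hne (W1.append (Walk.cons hA2 (Walk.cons hadj' W2')))
      have t4 := hnXY x' hx' x hx hne.symm (W1'.append (Walk.cons hA2.symm (Walk.cons hadj W2)))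
      simp [Walk.length_append, Walk.length_reverse, Walk.length_cons] at t1 t2 t3 t4
      omega
    · intro heq
      have t1 := hnYY x hx x' hx' hne (W2.reverse.append (W2'.copy heq.symm rfl))
      have t2 := hnXX x hx x' hx' hne
        (W1.append (Walk.cons hadj ((Walk.cons hadj'.symm W1'.reverse).copy heq.symm rfl)))
      simp [Walk.length_append, Walk.length_reverse, Walk.length_copy, Walk.length_cons] at t1 t2
      omega
    · intro hB2
      have t1 := hnYY x hx x' hx' hne (W2.reverse.append (Walk.cons hB2 W2'))
      have t2 := hnXX x hx x' hx' hne
        (W1.append (Walk.cons hadj (Walk.cons hB2 (Walk.cons hadj'.symm W1'.reverse))))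
      have t3 := hnXY x hx x' hx' hne (W1.append (Walk.cons hadj (Walk.cons hB2 W2')))
      have t4 := hnXY x' hx' x hx hne.symm (W1'.append (Walk.cons hadj' (Walk.cons hB2.symm W2)))
      simp [Walk.length_append, Walk.length_reverse, Walk.length_cons] at t1 t2 t3 t4
      omega
    · intro hC
      have t1 := hnXY x hx x' hx' hne (W1.append (Walk.cons hC W2'))
      have t2 := hnXX x hx x' hx' hne
        (W1.append (Walk.cons hC (Walk.cons hadj'.symm W1'.reverse)))
      have t3 := hnYY x hx x' hx' hne
        (W2.reverse.append (Walk.cons hadj.symm (Walk.cons hC W2')))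
      have t4 := hnXY x' hx' x hx hne.symm
        (W1'.append (Walk.cons hadj' (Walk.cons hC.symm (Walk.cons hadj W2))))
      simp [Walk.length_append, Walk.length_reverse, Walk.length_cons] at t1 t2 t3 t4
      omega
  have haInj : Set.InjOn a ↑X := by
    intro x hx x' hx' hEq
    by_contra hne
    exact ((key x (Finset.mem_coe.mp hx) x' (Finset.mem_coe.mp hx') hne).1.1) hEq
  have hbInj : Set.InjOn b ↑X := by
    intro x hx x' hx' hEq
    by_contra hne
    exact ((key x (Finset.mem_coe.mp hx) x' (Finset.mem_coe.mp hx') hne).2.1.1) hEq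
  refine ⟨X.image a, X.image b,
    fun v => if h : ∃ x, x ∈ X ∧ a x = v then b h.choose else v, ?_, ?_, ?_, ?_, ?_, ?_, ?_, ?_, ?_, ?_⟩
  case _ =>
    intro v hv
    obtain ⟨x, hx, rfl⟩ := Finset.mem_image.mp (Finset.mem_coe.mp hv)
    exact (hab x hx).1
  case _ =>
    intro v hv
    obtain ⟨x, hx, rfl⟩ := Finset.mem_image.mp (Finset.mem_coe.mp hv)
    exact (hab x hx).2.1
  case _ => rw [Finset.card_image_of_injOn haInj, hXc]
  case _ => rw [Finset.card_image_of_injOn hbInj, hXc]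
  case _ =>
    intro u hu v hv hAdj
    obtain ⟨x, hx, rfl⟩ := Finset.mem_image.mp hu
    obtain ⟨x', hx', rfl⟩ := Finset.mem_image.mp hv
    by_cases hne : x = x'
    · subst hne; exact G.irrefl hAdj
    · exact (key x hx x' hx' hne).1.2 hAdj
  case _ =>
    intro u hu v hv hAdj
    obtain ⟨x, hx, rfl⟩ := Finset.mem_image.mp hu
    obtain ⟨x', hx', rfl⟩ := Finset.mem_image.mp hv
    by_cases hne : x = x'
    · subst hne; exact G.irrefl hAdj
    · exact (key x hx x' hx' hne).2.1.2 hAdj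
  all_goals {
    have hf' : ∀ x ∈ X,
        (fun v => if h : ∃ y, y ∈ X ∧ a y = v then b h.choose else v) (a x) = b x := by
      intro x hx
      have hex : ∃ y, y ∈ X ∧ a y = a x := ⟨x, hx, rfl⟩
      simp only [dif_pos hex]
      have hspec := hex.choose_spec
      have : hex.choose = x :=
        haInj (Finset.mem_coe.mpr hspec.1) (Finset.mem_coe.mpr hx) hspec.2
      rw [this]
    first
    | -- InjOn
      (intro u hu v hv hEq
       obtain ⟨x, hx, rfl⟩ := Finset.mem_image.mp (Finset.mem_coe.mp hu)
       obtain ⟨x', hx', rfl⟩ := Finset.mem_image.mp (Finset.mem_coe.mp hv)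
       rw [hf' x hx, hf' x' hx'] at hEq
       exact congrArg a (hbInj (Finset.mem_coe.mpr hx) (Finset.mem_coe.mpr hx') hEq))
    | -- image equality
      (rw [Finset.image_image]
       exact (Finset.image_congr (fun x hx => (hf' x hx).symm)))
    | -- adjacency to partner
      (intro u hu
       obtain ⟨x, hx, rfl⟩ := Finset.mem_image.mp hu
       rw [hf' x hx]
       exact (hab x hx).2.2.1)
    | -- uniqueness of partner
      (intro u hu v hv hAdj
       obtain ⟨x, hx, rfl⟩ := Finset.mem_image.mp hu
       obtain ⟨x', hx', rfl⟩ := Finset.mem_image.mp hv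
       rw [hf' x hx]
       by_cases hne : x = x'
       · subst hne; rfl
       · exact absurd hAdj (key x hx x' hx' hne).2.2) }
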